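/- arXiv:1510.07143 — 2 statements merged into one kernel-verified Lean document; each statement's English description precedes it below -/
import Mathlib

section
/- Let A be an associative ring with 1, I, J two-sided ideals of A, and n ≥ 3. For distinct indices i, j, k and elements a ∈ A, α ∈ I, β ∈ J, the conjugate e_{ij}(a) e_{ji}(αβ) e_{ij}(a)⁻¹ can be written as a product of commutators of elements of E(n,I) and E(n,J); in particular e_{ij}(a) e_{ji}(αβ) e_{ij}(−a) = [e_{ik}(aα)e_{jk}(α), e_{ki}(β)e_{kj}(−βa)]. -/
open Matrix
open scoped commutatorElement

variable (n : Type*) [DecidableEq n] [Fintype n] (A : Type*) [Ring A]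

/-- The elementary matrix `e_{ij}(ξ) = 1 + ξ E_{ij}` as a unit of the matrix ring
(its inverse is `e_{ij}(-ξ)`). -/
def elemUnit {n : Type*} [DecidableEq n] [Fintype n] {A : Type*} [Ring A]
    (i j : n) (h : i ≠ j) (ξ : A) : (Matrix n n A)ˣ where
  val := 1 + Matrix.single i j ξ
  inv := 1 + Matrix.single i j (-ξ)
  val_inv := by
    have h0 : Matrix.single i j ξ * Matrix.single i j (-ξ) = 0 :=
      Matrix.single_mul_single_of_ne (c := ξ) i j i h.symm (-ξ)
    have h1 : Matrix.single i j ξ + Matrix.single i j (-ξ) = 0 := by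
      rw [← Matrix.single_add, add_neg_cancel, Matrix.single_zero]
    rw [mul_add, mul_one, add_mul, one_mul, h0, add_zero, add_assoc, h1, add_zero]
  inv_val := by
    have h0 : Matrix.single i j (-ξ) * Matrix.single i j ξ = 0 :=
      Matrix.single_mul_single_of_ne (c := -ξ) i j i h.symm ξ
    have h1 : Matrix.single i j (-ξ) + Matrix.single i j ξ = 0 := by
      rw [← Matrix.single_add, neg_add_cancel, Matrix.single_zero]
    rw [mul_add, mul_one, add_mul, one_mul, h0, add_zero, add_assoc, h1, add_zero]

/-- The subgroup `E(n,S)` of `GL(n,A)` generated by the elementary matrices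
`e_{ij}(ξ)` with `ξ ∈ S`, `i ≠ j`. -/
def elemSubgroup (S : Set A) : Subgroup (Matrix n n A)ˣ :=
  Subgroup.closure {u : (Matrix n n A)ˣ | ∃ i j : n, ∃ ξ ∈ S, i ≠ j ∧
    u.val = 1 + Matrix.single i j ξ}

/-- The relative elementary subgroup `E(n,A,I)`, the normal closure of `E(n,I)`
in `E(n,A)`. -/
def relElemSubgroup (I : TwoSidedIdeal A) : Subgroup (Matrix n n A)ˣ :=
  Subgroup.closure {x : (Matrix n n A)ˣ |
    ∃ c ∈ elemSubgroup n A (Set.univ : Set A), ∃ u ∈ elemSubgroup n A {a : A | a ∈ I},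
      x = c * u * c⁻¹}

/-- The principal congruence subgroup `GL(n,A,K)`: invertible matrices congruent to the
identity modulo `K`.  (This set is already a group, so it coincides with the subgroup it
generates.) -/
def congrSubgroup (K : TwoSidedIdeal A) : Subgroup (Matrix n n A)ˣ :=
  Subgroup.closure {u : (Matrix n n A)ˣ | ∀ i j : n, (u.val - 1) i j ∈ K}

lemma sb_neg {n α : Type*} [DecidableEq n] [Ring α] (i j : n) (c : α) :
    Matrix.single i j (-c) = -Matrix.single i j c := by
  ext p q
  simp only [Matrix.single, Matrix.of_apply, Matrix.neg_apply]
  split <;> simp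

lemma elemUnit_mem {N : Type*} [DecidableEq N] [Fintype N] {A : Type*} [Ring A]
    (S : Set A) (i j : N) (h : i ≠ j) (ξ : A) (hξ : ξ ∈ S) :
    elemUnit i j h ξ ∈ elemSubgroup N A S :=
  Subgroup.subset_closure ⟨i, j, ξ, hξ, h, rfl⟩

/-- For distinct `i, j, k`, `a ∈ A`, `α ∈ I`, `β ∈ J`, the conjugate
`e_{ij}(a) e_{ji}(αβ) e_{ij}(a)⁻¹` lies in `[E(n,I), E(n,J)]`; in particular it equals
the commutator `[e_{ik}(aα)e_{jk}(α), e_{ki}(β)e_{kj}(-βa)]`. -/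
theorem conj_elem_eq_commutator {N : ℕ} (hN : 3 ≤ N) {A : Type*} [Ring A]
    (I J : TwoSidedIdeal A) (i j k : Fin N)
    (hij : i ≠ j) (hik : i ≠ k) (hjk : j ≠ k)
    (a α β : A) (hα : α ∈ I) (hβ : β ∈ J) :
    elemUnit i j hij a * elemUnit j i hij.symm (α * β) * (elemUnit i j hij a)⁻¹ ∈
      ⁅elemSubgroup (Fin N) A {z : A | z ∈ I}, elemSubgroup (Fin N) A {z : A | z ∈ J}⁆ ∧
    elemUnit i j hij a * elemUnit j i hij.symm (α * β) * (elemUnit i j hij a)⁻¹ =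
      ⁅elemUnit i k hik (a * α) * elemUnit j k hjk α,
        elemUnit k i hik.symm β * elemUnit k j hjk.symm (-(β * a))⁆ := by
  have key : elemUnit i j hij a * elemUnit j i hij.symm (α * β) * (elemUnit i j hij a)⁻¹ =
      ⁅elemUnit i k hik (a * α) * elemUnit j k hjk α,
        elemUnit k i hik.symm β * elemUnit k j hjk.symm (-(β * a))⁆ := by
    refine Units.ext ?_
    show ((1 + Matrix.single i j a) * (1 + Matrix.single j i (α*β)) *
        (1 + Matrix.single i j (-a)) : Matrix (Fin N) (Fin N) A) =
      ((1 + Matrix.single i k (a*α)) * (1 + Matrix.single j k α)) *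
      ((1 + Matrix.single k i β) * (1 + Matrix.single k j (-(β*a)))) *
      ((1 + Matrix.single j k (-α)) * (1 + Matrix.single i k (-(a*α)))) *
      ((1 + Matrix.single k j (-(-(β*a)))) * (1 + Matrix.single k i (-β)))
    simp only [mul_add, add_mul, one_mul, mul_one, Matrix.single_mul_single_same,
      Matrix.single_mul_single_of_ne, hij, hik, hjk, hij.symm, hik.symm, hjk.symm, ne_eq,
      not_false_iff, add_zero, zero_add, mul_zero, zero_mul, neg_neg, mul_neg, neg_mul,
      sb_neg, mul_assoc]
    abel
  refine ⟨?_, key⟩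
  rw [key]
  exact Subgroup.commutator_mem_commutator
    (mul_mem (elemUnit_mem _ i k hik (a * α) (I.mul_mem_left a α hα))
      (elemUnit_mem _ j k hjk α hα))
    (mul_mem (elemUnit_mem _ k i hik.symm β hβ)
      (elemUnit_mem _ k j hjk.symm (-(β * a)) (neg_mem (J.mul_mem_right β a hβ))))
end

section
/- Let A be an associative ring with 1 and I a two-sided ideal. For any x ∈ GL(n,A,I) and y ∈ GL(n,A,I), the 2n×2n block-diagonal matrix diag(xyx⁻¹y⁻¹, 1) belongs to the relative elementary subgroup E(2n,A,I). -/
open Matrix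

variable (n : Type*) [DecidableEq n] [Fintype n] (A : Type*) [Ring A]

namespace RelElemAux

variable {N : ℕ} {A : Type*} [Ring A]

/-- upper block-unipotent unit `[[1, β],[0,1]]`. -/
def uppUnit (β : Matrix (Fin N) (Fin N) A) : (Matrix (Fin N ⊕ Fin N) (Fin N ⊕ Fin N) A)ˣ where
  val := Matrix.fromBlocks 1 β 0 1
  inv := Matrix.fromBlocks 1 (-β) 0 1
  val_inv := by rw [Matrix.fromBlocks_multiply, ← Matrix.fromBlocks_one]; congr 1 <;> simp
  inv_val := by rw [Matrix.fromBlocks_multiply, ← Matrix.fromBlocks_one]; congr 1 <;> simp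

def lowUnit (γ : Matrix (Fin N) (Fin N) A) : (Matrix (Fin N ⊕ Fin N) (Fin N ⊕ Fin N) A)ˣ where
  val := Matrix.fromBlocks 1 0 γ 1
  inv := Matrix.fromBlocks 1 0 (-γ) 1
  val_inv := by rw [Matrix.fromBlocks_multiply, ← Matrix.fromBlocks_one]; congr 1 <;> simp
  inv_val := by rw [Matrix.fromBlocks_multiply, ← Matrix.fromBlocks_one]; congr 1 <;> simp

theorem uppUnit_mul (β γ : Matrix (Fin N) (Fin N) A) :
    uppUnit β * uppUnit γ = uppUnit (β + γ) := by
  ext1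
  show Matrix.fromBlocks 1 β 0 1 * Matrix.fromBlocks 1 γ 0 1 = Matrix.fromBlocks 1 (β + γ) 0 1
  rw [Matrix.fromBlocks_multiply]; congr 1 <;> simp [add_comm]

theorem lowUnit_mul (β γ : Matrix (Fin N) (Fin N) A) :
    lowUnit β * lowUnit γ = lowUnit (β + γ) := by
  ext1
  show Matrix.fromBlocks 1 0 β 1 * Matrix.fromBlocks 1 0 γ 1 = Matrix.fromBlocks 1 0 (β + γ) 1
  rw [Matrix.fromBlocks_multiply]; congr 1 <;> simp [add_comm]

theorem uppUnit_mem (S : Set A) (h0 : (0 : A) ∈ S) (β : Matrix (Fin N) (Fin N) A)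
    (hβ : ∀ i j, β i j ∈ S) : uppUnit β ∈ elemSubgroup (Fin N ⊕ Fin N) A S := by
  have key : ∀ s : Finset (Fin N × Fin N), ∃ u ∈ elemSubgroup (Fin N ⊕ Fin N) A S,
      u.val = 1 + ∑ p ∈ s,
        Matrix.single (Sum.inl p.1) (Sum.inr p.2) (β p.1 p.2) := by
    intro s
    induction s using Finset.induction with
    | empty => exact ⟨1, one_mem _, by simp⟩
    | @insert p s hp ih =>
      obtain ⟨u, hu, hval⟩ := ih
      refine ⟨elemUnit (Sum.inl p.1) (Sum.inr p.2) (by simp) (β p.1 p.2) * u,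
        mul_mem (Subgroup.subset_closure
          ⟨Sum.inl p.1, Sum.inr p.2, β p.1 p.2, hβ _ _, by simp, rfl⟩) hu, ?_⟩
      have hEM : (Matrix.single (Sum.inl p.1) (Sum.inr p.2) (β p.1 p.2) :
          Matrix (Fin N ⊕ Fin N) (Fin N ⊕ Fin N) A) *
          (∑ q ∈ s, Matrix.single (Sum.inl q.1) (Sum.inr q.2) (β q.1 q.2)) = 0 := by
        rw [Finset.mul_sum]
        exact Finset.sum_eq_zero fun q _ =>
          Matrix.single_mul_single_of_ne _ _ _ (Sum.inl q.1)
            (by simp) _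
      rw [Units.val_mul, hval, Finset.sum_insert hp]
      show (1 + Matrix.single (Sum.inl p.1) (Sum.inr p.2) (β p.1 p.2)) * _ = _
      rw [mul_add, mul_one, add_mul, one_mul, hEM, add_zero]
      abel
  obtain ⟨u, hu, hval⟩ := key Finset.univ
  have huv : uppUnit β = u := by
    ext1
    rw [hval]
    show Matrix.fromBlocks 1 β 0 1 = _
    ext i j
    rcases i with i | i <;> rcases j with j | j <;>
      simp [Matrix.add_apply, Matrix.sum_apply, Matrix.single, Matrix.one_apply,
        Fintype.sum_prod_type, ite_and, Finset.sum_ite_eq, Matrix.fromBlocks]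
  rw [huv]; exact hu

end RelElemAux

namespace RelElemAux

variable {N : ℕ} {A : Type*} [Ring A]

theorem lowUnit_mem (S : Set A) (h0 : (0 : A) ∈ S) (γ : Matrix (Fin N) (Fin N) A)
    (hγ : ∀ i j, γ i j ∈ S) : lowUnit γ ∈ elemSubgroup (Fin N ⊕ Fin N) A S := by
  have key : ∀ s : Finset (Fin N × Fin N), ∃ u ∈ elemSubgroup (Fin N ⊕ Fin N) A S,
      u.val = 1 + ∑ p ∈ s,
        Matrix.single (Sum.inr p.1) (Sum.inl p.2) (γ p.1 p.2) := by
    intro s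
    induction s using Finset.induction with
    | empty => exact ⟨1, one_mem _, by simp⟩
    | @insert p s hp ih =>
      obtain ⟨u, hu, hval⟩ := ih
      refine ⟨elemUnit (Sum.inr p.1) (Sum.inl p.2) (by simp) (γ p.1 p.2) * u,
        mul_mem (Subgroup.subset_closure
          ⟨Sum.inr p.1, Sum.inl p.2, γ p.1 p.2, hγ _ _, by simp, rfl⟩) hu, ?_⟩
      have hEM : (Matrix.single (Sum.inr p.1) (Sum.inl p.2) (γ p.1 p.2) :
          Matrix (Fin N ⊕ Fin N) (Fin N ⊕ Fin N) A) *
          (∑ q ∈ s, Matrix.single (Sum.inr q.1) (Sum.inl q.2) (γ q.1 q.2)) = 0 := by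
        rw [Finset.mul_sum]
        exact Finset.sum_eq_zero fun q _ =>
          Matrix.single_mul_single_of_ne _ _ _ (Sum.inr q.1)
            (by simp) _
      rw [Units.val_mul, hval, Finset.sum_insert hp]
      show (1 + Matrix.single (Sum.inr p.1) (Sum.inl p.2) (γ p.1 p.2)) * _ = _
      rw [mul_add, mul_one, add_mul, one_mul, hEM, add_zero]
      abel
  obtain ⟨u, hu, hval⟩ := key Finset.univ
  have huv : lowUnit γ = u := by
    ext1
    rw [hval]
    show Matrix.fromBlocks 1 0 γ 1 = _
    ext i j
    rcases i with i | i <;> rcases j with j | j <;>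
      simp [Matrix.add_apply, Matrix.sum_apply, Matrix.single, Matrix.one_apply,
        Fintype.sum_prod_type, ite_and, Finset.sum_ite_eq, Matrix.fromBlocks]
  rw [huv]; exact hu

/-- `diag(α, α⁻¹)` as a unit. -/
def diagUnit (α : (Matrix (Fin N) (Fin N) A)ˣ) :
    (Matrix (Fin N ⊕ Fin N) (Fin N ⊕ Fin N) A)ˣ where
  val := Matrix.fromBlocks α.val 0 0 (α⁻¹).val
  inv := Matrix.fromBlocks (α⁻¹).val 0 0 α.val
  val_inv := by
    rw [Matrix.fromBlocks_multiply]
    simp only [mul_zero, zero_mul, add_zero, zero_add, Units.mul_inv, Units.inv_mul]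
    rw [Matrix.fromBlocks_one]
  inv_val := by
    rw [Matrix.fromBlocks_multiply]
    simp only [mul_zero, zero_mul, add_zero, zero_add, Units.mul_inv, Units.inv_mul]
    rw [Matrix.fromBlocks_one]

theorem key_identity (α : (Matrix (Fin N) (Fin N) A)ˣ) :
    diagUnit α * (uppUnit 1 * lowUnit (-1) * uppUnit 1) =
      uppUnit α.val * lowUnit (-(α⁻¹).val) * uppUnit α.val := by
  ext1
  show Matrix.fromBlocks α.val 0 0 (α⁻¹).val *
      (Matrix.fromBlocks 1 1 0 1 * Matrix.fromBlocks 1 0 (-1) 1 * Matrix.fromBlocks 1 1 0 1) =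
    Matrix.fromBlocks 1 α.val 0 1 * Matrix.fromBlocks 1 0 (-(α⁻¹).val) 1 *
      Matrix.fromBlocks 1 α.val 0 1
  simp only [Matrix.fromBlocks_multiply, one_mul, mul_one, mul_zero, zero_mul, add_zero,
    zero_add, mul_neg, neg_mul, Units.mul_inv, Units.inv_mul, add_neg_cancel, neg_add_cancel]

end RelElemAux

namespace RelElemAux

variable {N : ℕ} {A : Type*} [Ring A]

theorem entry_mul_mem (I : TwoSidedIdeal A) {u v : Matrix (Fin N) (Fin N) A}
    (hu : ∀ i j, (u - 1) i j ∈ I) (hv : ∀ i j, (v - 1) i j ∈ I) (i j : Fin N) :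
    (u * v - 1) i j ∈ I := by
  have h : u * v - 1 = (u - 1) * v + (v - 1) := by noncomm_ring
  rw [h, Matrix.add_apply, Matrix.mul_apply]
  exact I.add_mem (sum_mem fun k _ => I.mul_mem_right _ _ (hu i k)) (hv i j)

theorem entry_inv_mem (I : TwoSidedIdeal A) {α : (Matrix (Fin N) (Fin N) A)ˣ}
    (h : ∀ i j, (α.val - 1) i j ∈ I) (i j : Fin N) : ((α⁻¹).val - 1) i j ∈ I := by
  have hm : (α⁻¹).val - 1 = (α⁻¹).val * (1 - α.val) := by
    rw [mul_sub, mul_one, Units.inv_mul]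
  rw [hm, Matrix.mul_apply]
  refine sum_mem fun k _ => I.mul_mem_left _ _ ?_
  have h1 : ((1 : Matrix (Fin N) (Fin N) A) - α.val) k j = -((α.val - 1) k j) := by
    rw [← neg_sub, Matrix.neg_apply]
  rw [h1]
  exact I.neg_mem (h k j)

theorem diagUnit_mem (I : TwoSidedIdeal A) (α : (Matrix (Fin N) (Fin N) A)ˣ)
    (h : ∀ i j, (α.val - 1) i j ∈ I) :
    diagUnit α ∈ relElemSubgroup (Fin N ⊕ Fin N) A I := by
  set ε : Matrix (Fin N) (Fin N) A := α.val - 1 with hε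
  set δ : Matrix (Fin N) (Fin N) A := 1 - (α⁻¹).val with hδ
  have hU : uppUnit (α.val) = uppUnit 1 * uppUnit ε := by
    rw [uppUnit_mul]; congr 1; rw [hε]; abel
  have hL : lowUnit (-(α⁻¹).val) = lowUnit (-1) * lowUnit δ := by
    rw [lowUnit_mul]; congr 1; rw [hδ]; abel
  have hD : diagUnit α = ((uppUnit 1 * uppUnit ε) * (lowUnit (-1) * lowUnit δ) *
      (uppUnit 1 * uppUnit ε)) * (uppUnit 1 * lowUnit (-1) * uppUnit 1)⁻¹ := by
    rw [← hU, ← hL, eq_mul_inv_iff_mul_eq]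
    exact key_identity α
  have grp : diagUnit α =
      (uppUnit 1 * uppUnit ε * (uppUnit (1 : Matrix (Fin N) (Fin N) A))⁻¹) *
      ((uppUnit 1 * lowUnit (-1)) * lowUnit δ * (uppUnit 1 * lowUnit (-1))⁻¹) *
      ((uppUnit 1 * lowUnit (-1) * uppUnit 1) * uppUnit ε *
        (uppUnit 1 * lowUnit (-1) * uppUnit 1)⁻¹) := by
    rw [hD]; group
  rw [grp]
  have memU1 : uppUnit (1 : Matrix (Fin N) (Fin N) A) ∈
      elemSubgroup (Fin N ⊕ Fin N) A Set.univ :=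
    uppUnit_mem Set.univ (Set.mem_univ 0) _ (fun _ _ => Set.mem_univ _)
  have memL1 : lowUnit (-1 : Matrix (Fin N) (Fin N) A) ∈
      elemSubgroup (Fin N ⊕ Fin N) A Set.univ :=
    lowUnit_mem Set.univ (Set.mem_univ 0) _ (fun _ _ => Set.mem_univ _)
  have memε : uppUnit ε ∈ elemSubgroup (Fin N ⊕ Fin N) A {a : A | a ∈ I} :=
    uppUnit_mem _ I.zero_mem _ (fun i j => h i j)
  have memδ : lowUnit δ ∈ elemSubgroup (Fin N ⊕ Fin N) A {a : A | a ∈ I} := by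
    refine lowUnit_mem _ I.zero_mem _ (fun i j => ?_)
    have h1 : δ i j = -(((α⁻¹).val - 1) i j) := by rw [hδ, ← neg_sub, Matrix.neg_apply]
    show δ i j ∈ I
    rw [h1]
    exact I.neg_mem (entry_inv_mem I h i j)
  exact mul_mem (mul_mem
    (Subgroup.subset_closure ⟨_, memU1, _, memε, rfl⟩)
    (Subgroup.subset_closure ⟨_, mul_mem memU1 memL1, _, memδ, rfl⟩))
    (Subgroup.subset_closure ⟨_, mul_mem (mul_mem memU1 memL1) memU1, _, memε, rfl⟩)

end RelElemAux

/-- The block diagonal embedding `GL(n,A) → GL(2n,A)`, `g ↦ diag(g, 1)`. -/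
def blockDiagUnit {N : ℕ} {A : Type*} [Ring A] (u : (Matrix (Fin N) (Fin N) A)ˣ) :
    (Matrix (Fin N ⊕ Fin N) (Fin N ⊕ Fin N) A)ˣ where
  val := Matrix.fromBlocks u.val 0 0 1
  inv := Matrix.fromBlocks (u⁻¹).val 0 0 1
  val_inv := by
    rw [Matrix.fromBlocks_multiply]
    simp only [mul_zero, zero_mul, add_zero, zero_add, mul_one, one_mul,
      Units.mul_inv, Units.inv_mul]
    rw [Matrix.fromBlocks_one]
  inv_val := by
    rw [Matrix.fromBlocks_multiply]
    simp only [mul_zero, zero_mul, add_zero, zero_add, mul_one, one_mul,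
      Units.mul_inv, Units.inv_mul]
    rw [Matrix.fromBlocks_one]

/-- For `x, y ∈ GL(n,A,I)`, the `2n × 2n` matrix `diag(xyx⁻¹y⁻¹, 1)` belongs to the
relative elementary subgroup `E(2n,A,I)`. -/
theorem blockDiag_commutator_mem_relElem {N : ℕ} {A : Type*} [Ring A]
    (I : TwoSidedIdeal A) (x y : (Matrix (Fin N) (Fin N) A)ˣ)
    (hx : ∀ i j, (x.val - 1) i j ∈ I) (hy : ∀ i j, (y.val - 1) i j ∈ I) :
    blockDiagUnit (x * y * x⁻¹ * y⁻¹) ∈ relElemSubgroup (Fin N ⊕ Fin N) A I := by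
  have hyx : ∀ i j, ((y * x).val - 1) i j ∈ I := fun i j =>
    RelElemAux.entry_mul_mem I hy hx i j
  have hyxi : ∀ i j, (((y * x)⁻¹).val - 1) i j ∈ I := RelElemAux.entry_inv_mem I hyx
  have key : blockDiagUnit (x * y * x⁻¹ * y⁻¹) =
      RelElemAux.diagUnit x * RelElemAux.diagUnit y * RelElemAux.diagUnit ((y * x)⁻¹) := by
    ext1
    show Matrix.fromBlocks (x * y * x⁻¹ * y⁻¹).val 0 0 1 =
      Matrix.fromBlocks x.val 0 0 (x⁻¹).val * Matrix.fromBlocks y.val 0 0 (y⁻¹).val *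
        Matrix.fromBlocks ((y * x)⁻¹).val 0 0 (((y * x)⁻¹)⁻¹).val
    simp only [Matrix.fromBlocks_multiply, mul_zero, zero_mul, add_zero, zero_add]
    have e1 : x.val * y.val * ((y * x)⁻¹).val = (x * y * x⁻¹ * y⁻¹).val := by
      rw [← Units.val_mul, ← Units.val_mul]
      exact congrArg Units.val (by group)
    have e2 : (x⁻¹).val * (y⁻¹).val * (((y * x)⁻¹)⁻¹).val = (1 : Matrix (Fin N) (Fin N) A) := by
      rw [← Units.val_mul, ← Units.val_mul, ← Units.val_one]
      exact congrArg Units.val (by group)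
    rw [e1, e2]
  rw [key]
  exact mul_mem (mul_mem (RelElemAux.diagUnit_mem I x hx) (RelElemAux.diagUnit_mem I y hy))
    (RelElemAux.diagUnit_mem I _ hyxi)
end
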